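/- Let F be a nonzero homogeneous polynomial of degree 4 in four variables over ℂ. Suppose there exist a nonzero homogeneous linear form ℓ, a homogeneous quadratic form Q, and a homogeneous cubic form G in the same four variables such that F = Q² + ℓ·G. Then there exists a nonzero vector v ∈ ℂ⁴ at which all four partial derivatives of F vanish. In particular, a quartic surface in ℙ³(ℂ) possessing a trope (a plane whose intersection with the surface is a conic counted with multiplicity two) is necessarily singular. -/

import Mathlib

open MvPolynomial


lemma degSingle {σ : Type*} (i : σ) (n : ℕ) : Finsupp.degree (Finsupp.single i n) = n := by
  classical
  rcases eq_or_ne n 0 with h | h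
  · simp [h, Finsupp.degree]
  · rw [Finsupp.degree_apply, Finsupp.support_single_ne_zero _ h, Finset.sum_singleton,
      Finsupp.single_eq_same]

lemma degAdd {σ : Type*} (m m' : σ →₀ ℕ) :
    Finsupp.degree (m + m') = Finsupp.degree m + Finsupp.degree m' := by
  rw [Finsupp.degree_eq_weight_one]
  exact map_add _ m m'

lemma degDecomp {σ : Type*} (m : σ →₀ ℕ) (n : ℕ) (h : Finsupp.degree m = n + 1) :
    ∃ (i : σ) (m' : σ →₀ ℕ), m = Finsupp.single i 1 + m' ∧ Finsupp.degree m' = n := by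
  classical
  have hm : m ≠ 0 := by
    intro h0; rw [h0, map_zero] at h; omega
  obtain ⟨i, hi⟩ := Finsupp.ne_iff.mp hm
  simp only [Finsupp.coe_zero, Pi.zero_apply] at hi
  refine ⟨i, m - Finsupp.single i 1, ?_, ?_⟩
  · ext j
    rcases eq_or_ne j i with rfl | hj
    · simp only [Finsupp.add_apply, Finsupp.single_eq_same, Finsupp.tsub_apply]
      omega
    · simp [Finsupp.single_eq_of_ne' (Ne.symm hj)]
  · have : m = Finsupp.single i 1 + (m - Finsupp.single i 1) := by
      ext j
      rcases eq_or_ne j i with rfl | hj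
      · simp only [Finsupp.add_apply, Finsupp.single_eq_same, Finsupp.tsub_apply]
        omega
      · simp [Finsupp.single_eq_of_ne' (Ne.symm hj)]
    rw [this, degAdd, degSingle] at h
    omega

lemma degOne {σ : Type*} (m : σ →₀ ℕ) (h : Finsupp.degree m = 1) :
    ∃ i, m = Finsupp.single i 1 := by
  obtain ⟨i, m', rfl, hm'⟩ := degDecomp m 0 h
  rw [Finsupp.degree_eq_zero_iff] at hm'
  exact ⟨i, by simp [hm']⟩

lemma degTwo {σ : Type*} (m : σ →₀ ℕ) (h : Finsupp.degree m = 2) :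
    ∃ i j, m = Finsupp.single i 1 + Finsupp.single j 1 := by
  obtain ⟨i, m', rfl, hm'⟩ := degDecomp m 1 h
  obtain ⟨j, rfl⟩ := degOne m' hm'
  exact ⟨i, j, rfl⟩

/-- induction over homogeneous polynomials -/
lemma homInd {σ : Type*} {n : ℕ} (Q : MvPolynomial σ ℂ) (hQ : Q.IsHomogeneous n)
    (P : MvPolynomial σ ℂ → Prop) (h0 : P 0) (hadd : ∀ f g, P f → P g → P (f + g))
    (hmono : ∀ m : σ →₀ ℕ, Finsupp.degree m = n → ∀ c : ℂ, P (monomial m c)) : P Q := by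
  rw [← support_sum_monomial_coeff Q]
  refine Finset.sum_induction _ P hadd h0 ?_
  intro m hm
  refine hmono m ?_ _
  by_contra hd
  exact (mem_support_iff.mp hm) (hQ.coeff_eq_zero hd)

lemma evalMono {σ : Type*} (i j : σ) (c : ℂ) (v : σ → ℂ) :
    eval v (monomial (Finsupp.single i 1 + Finsupp.single j 1) c) = c * (v i * v j) := by
  classical
  rw [eval_monomial]
  congr 1
  rw [Finsupp.prod_add_index' (fun k => pow_zero (v k)) (fun k a b => pow_add (v k) a b)]
  simp [Finsupp.prod_single_index]

lemma evalMono1 {σ : Type*} (i : σ) (c : ℂ) (v : σ → ℂ) :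
    eval v (monomial (Finsupp.single i 1) c) = c * v i := by
  rw [eval_monomial]
  simp [Finsupp.prod_single_index]

lemma degUniv {σ : Type*} [Fintype σ] (m : σ →₀ ℕ) : Finsupp.degree m = ∑ i, m i := by
  rw [Finsupp.degree_apply]
  exact Finset.sum_subset (Finset.subset_univ _)
    (fun i _ hi => Finsupp.notMem_support_iff.mp hi)

/-- scaling for homogeneous polynomials -/
lemma evalScale {σ : Type*} [Fintype σ] {d : ℕ} {H : MvPolynomial σ ℂ}
    (hH : H.IsHomogeneous d) (lam : ℂ) (v : σ → ℂ) :
    eval (fun i => lam * v i) H = lam ^ d * eval v H := by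
  rw [eval_eq', eval_eq', Finset.mul_sum]
  refine Finset.sum_congr rfl fun m hm => ?_
  have hdeg : Finsupp.degree m = d := by
    by_contra hd
    exact (mem_support_iff.mp hm) (hH.coeff_eq_zero hd)
  have : ∏ i, (lam * v i) ^ m i = lam ^ d * ∏ i, v i ^ m i := by
    simp_rw [mul_pow]
    rw [Finset.prod_mul_distrib, Finset.prod_pow_eq_pow_sum, ← degUniv, hdeg]
  rw [this]; ring

variable {Q : MvPolynomial (Fin 4) ℂ}

/-- the polar expansion of a quadratic form -/
lemma qStar (hQ : Q.IsHomogeneous 2) (p u : Fin 4 → ℂ) (a b : ℂ) :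
    eval (fun i => a * p i + b * u i) Q =
      a ^ 2 * eval p Q
        + a * b * (eval (fun i => p i + u i) Q - eval p Q - eval u Q)
        + b ^ 2 * eval u Q := by
  refine homInd Q hQ (fun Q => eval (fun i => a * p i + b * u i) Q =
      a ^ 2 * eval p Q
        + a * b * (eval (fun i => p i + u i) Q - eval p Q - eval u Q)
        + b ^ 2 * eval u Q) (by simp) (fun f g hf hg => ?_) (fun m hm c => ?_)
  · simp only [map_add]
    linear_combination hf + hg
  · obtain ⟨i, j, rfl⟩ := degTwo m hm
    simp only [evalMono]
    ring

/-- linearity of the polar form in its second slot -/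
lemma qBilin (hQ : Q.IsHomogeneous 2) (p u v : Fin 4 → ℂ) (t : ℂ) :
    eval (fun i => p i + (u i + t * v i)) Q - eval p Q - eval (fun i => u i + t * v i) Q =
      (eval (fun i => p i + u i) Q - eval p Q - eval u Q)
        + t * (eval (fun i => p i + v i) Q - eval p Q - eval v Q) := by
  refine homInd Q hQ (fun Q => eval (fun i => p i + (u i + t * v i)) Q - eval p Q
      - eval (fun i => u i + t * v i) Q =
      (eval (fun i => p i + u i) Q - eval p Q - eval u Q)
        + t * (eval (fun i => p i + v i) Q - eval p Q - eval v Q))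
    (by simp) (fun f g hf hg => ?_) (fun m hm c => ?_)
  · simp only [map_add]
    linear_combination hf + hg
  · obtain ⟨i, j, rfl⟩ := degTwo m hm
    simp only [evalMono]
    ring

/-- linear combination rule for a linear form -/
lemma lLin {l : MvPolynomial (Fin 4) ℂ} (hl : l.IsHomogeneous 1) (x y : Fin 4 → ℂ) (a b : ℂ) :
    eval (fun i => a * x i + b * y i) l = a * eval x l + b * eval y l := by
  refine homInd l hl (fun l => eval (fun i => a * x i + b * y i) l
      = a * eval x l + b * eval y l) (by simp) (fun f g hf hg => ?_) (fun m hm c => ?_)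
  · simp only [map_add]
    linear_combination hf + hg
  · obtain ⟨i, rfl⟩ := degOne m hm
    simp only [evalMono1]
    ring

/-- A polynomial related to another by degree-d inversion, where the other has nonzero
constant term, has a root. -/
lemma rootOfRel (P P' : Polynomial ℂ) (d : ℕ) (hd : 0 < d)
    (hrel : ∀ t : ℂ, t ≠ 0 → P.eval t = t ^ d * P'.eval t⁻¹)
    (h0 : P'.eval 0 ≠ 0) : ∃ t, P.eval t = 0 := by
  by_contra h
  push_neg at h
  have hdeg : P.degree ≤ 0 := by
    by_contra hdeg
    push_neg at hdeg
    obtain ⟨z, hz⟩ := Complex.exists_root hdeg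
    exact h z hz
  obtain ⟨k, rfl⟩ : ∃ k, P = Polynomial.C k :=
    ⟨P.coeff 0, (Polynomial.eq_C_of_degree_le_zero hdeg)⟩
  have hk : k ≠ 0 := by simpa using h 0
  have hP' : P' - Polynomial.C k * Polynomial.X ^ d = 0 := by
    apply Polynomial.eq_zero_of_infinite_isRoot
    apply Set.Infinite.mono (s := {(0:ℂ)}ᶜ)
    · intro z hz
      have hz0 : (z : ℂ) ≠ 0 := hz
      have := hrel z⁻¹ (inv_ne_zero hz0)
      rw [Polynomial.eval_C, inv_inv] at this
      have h2 : P'.eval z = k * z ^ d := by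
        rw [this, inv_pow]
        field_simp
      simp [Polynomial.IsRoot, h2]
    · exact Set.Finite.infinite_compl (Set.finite_singleton 0)
  have := congrArg (Polynomial.eval (0:ℂ)) (sub_eq_zero.mp hP')
  simp [zero_pow hd.ne'] at this
  exact h0 (by simpa using this)

lemma compPoly {σ : Type*} (g : σ → Polynomial ℂ) (H : MvPolynomial σ ℂ) (t : ℂ) :
    Polynomial.eval t (MvPolynomial.aeval g H) = eval (fun i => (g i).eval t) H := by
  rw [MvPolynomial.aeval_def]
  have := eval₂_comp_left (Polynomial.evalRingHom t) (algebraMap ℂ (Polynomial ℂ)) g H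
  simp only [Polynomial.coe_evalRingHom] at this
  rw [this]
  have hcomp : (Polynomial.evalRingHom t).comp (algebraMap ℂ (Polynomial ℂ)) = RingHom.id ℂ := by
    ext x; simp
  rw [hcomp]
  rfl

lemma compMv {σ τ : Type*} (g : σ → MvPolynomial τ ℂ) (H : MvPolynomial σ ℂ) (w : τ → ℂ) :
    eval w (MvPolynomial.aeval g H) = eval (fun i => eval w (g i)) H := by
  rw [MvPolynomial.aeval_def]
  have := eval₂_comp_left (MvPolynomial.eval w) (algebraMap ℂ (MvPolynomial τ ℂ)) g H
  rw [this]
  have hcomp : (MvPolynomial.eval w).comp (algebraMap ℂ (MvPolynomial τ ℂ)) = RingHom.id ℂ := by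
    ext x; simp
  rw [hcomp]
  rfl

/-- every binary form of positive degree over ℂ has a nontrivial zero -/
lemma binRoot {d : ℕ} (hd : 0 < d) (b : MvPolynomial (Fin 2) ℂ) (hb : b.IsHomogeneous d) :
    ∃ s t : ℂ, ¬(s = 0 ∧ t = 0) ∧ eval ![s, t] b = 0 := by
  by_cases h10 : eval ![1, 0] b = 0
  · exact ⟨1, 0, by simp, h10⟩
  · set P := MvPolynomial.aeval ![Polynomial.X, (1 : Polynomial ℂ)] b with hP
    set P' := MvPolynomial.aeval ![(1 : Polynomial ℂ), Polynomial.X] b with hP'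
    have evalP : ∀ t : ℂ, P.eval t = eval ![t, 1] b := by
      intro t
      have he : (fun i => Polynomial.eval t (![Polynomial.X, (1 : Polynomial ℂ)] i))
          = ![t, 1] := by funext i; fin_cases i <;> simp
      rw [hP, compPoly, he]
    have evalP' : ∀ z : ℂ, P'.eval z = eval ![1, z] b := by
      intro z
      have he : (fun i => Polynomial.eval z (![(1 : Polynomial ℂ), Polynomial.X] i))
          = ![1, z] := by funext i; fin_cases i <;> simp
      rw [hP', compPoly, he]
    have hrel : ∀ t : ℂ, t ≠ 0 → P.eval t = t ^ d * P'.eval t⁻¹ := by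
      intro t ht
      rw [evalP, evalP', ← evalScale hb t ![1, t⁻¹]]
      have he : (fun i => t * ![(1:ℂ), t⁻¹] i) = ![t, 1] := by
        funext i; fin_cases i <;> simp [mul_inv_cancel₀ ht]
      rw [he]
    have h0 : P'.eval 0 ≠ 0 := by rw [evalP']; simpa using h10
    obtain ⟨t₀, ht₀⟩ := rootOfRel P P' d hd hrel h0
    exact ⟨t₀, 1, by simp, by rw [← evalP t₀]; exact ht₀⟩

/-- a nonzero linear form in 4 variables has a 3-dimensional kernel with an
independent spanning triple -/
lemma kerBasis {l : MvPolynomial (Fin 4) ℂ} (hl : l.IsHomogeneous 1) (hl0 : l ≠ 0) :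
    ∃ A : Fin 3 → (Fin 4 → ℂ), (∀ k, eval (A k) l = 0) ∧
      (∀ x y z : ℂ, (fun i => x * A 0 i + y * A 1 i + z * A 2 i) = (0 : Fin 4 → ℂ) →
        x = 0 ∧ y = 0 ∧ z = 0) := by
  obtain ⟨v₀, hv₀⟩ : ∃ v₀ : Fin 4 → ℂ, eval v₀ l ≠ 0 := by
    by_contra h
    push_neg at h
    exact hl0 (MvPolynomial.funext (fun x => by simp [h x]))
  set Lmap : (Fin 4 → ℂ) →ₗ[ℂ] ℂ :=
    { toFun := fun v => eval v l
      map_add' := by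
        intro x y
        show eval (x + y) l = eval x l + eval y l
        have h : x + y = fun i => 1 * x i + 1 * y i := by funext i; simp
        rw [h, lLin hl]; ring
      map_smul' := by
        intro c x
        simp only [RingHom.id_apply, smul_eq_mul]
        show eval (c • x) l = c * eval x l
        have h : c • x = fun i => c * x i + 0 * x i := by funext i; simp
        rw [h, lLin hl]
        simp } with hLmap
  have hLapp : ∀ v, Lmap v = eval v l := fun v => rfl
  have hsurj : Function.Surjective Lmap := by
    intro y
    refine ⟨(y / eval v₀ l) • v₀, ?_⟩
    rw [map_smul, hLapp, smul_eq_mul]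
    field_simp
  have hker : Module.finrank ℂ ↥(LinearMap.ker Lmap) = 3 := by
    have h1 := LinearMap.finrank_range_add_finrank_ker Lmap
    rw [LinearMap.range_eq_top.mpr hsurj, finrank_top] at h1
    simp [Module.finrank_fintype_fun_eq_card, Module.finrank_self] at h1
    omega
  set bas := Module.finBasisOfFinrankEq ℂ ↥(LinearMap.ker Lmap) hker with hbas
  set A : Fin 3 → (Fin 4 → ℂ) := fun k => ((bas k : ↥(LinearMap.ker Lmap)) : Fin 4 → ℂ) with hA
  have hli : LinearIndependent ℂ A :=
    bas.linearIndependent.map' (Submodule.subtype _) (Submodule.ker_subtype _)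
  refine ⟨A, fun k => ?_, fun x y z hxyz => ?_⟩
  · have := (bas k).2
    rw [LinearMap.mem_ker] at this
    rw [← hLapp]
    exact this
  · have hsum : ∑ k, (![x, y, z] k) • A k = 0 := by
      funext i
      have := congrFun hxyz i
      simp only [Pi.zero_apply] at this ⊢
      rw [Fin.sum_univ_three]
      simpa using this
    have := Fintype.linearIndependent_iff.mp hli ![x, y, z] hsum
    exact ⟨this 0, this 1, this 2⟩

variable {Q l G : MvPolynomial (Fin 4) ℂ}

/-- points of the form `q(u)•p₀ - B(p₀,u)•u` lie on the conic -/
lemma rOnConic (hQ : Q.IsHomogeneous 2) (p₀ u : Fin 4 → ℂ) (hqp₀ : eval p₀ Q = 0) :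
    eval (fun i => eval u Q * p₀ i
      - (eval (fun j => p₀ j + u j) Q - eval p₀ Q - eval u Q) * u i) Q = 0 := by
  have h := qStar hQ p₀ u (eval u Q)
    (-(eval (fun j => p₀ j + u j) Q - eval p₀ Q - eval u Q))
  have he : (fun i => eval u Q * p₀ i
      + -(eval (fun j => p₀ j + u j) Q - eval p₀ Q - eval u Q) * u i)
      = fun i => eval u Q * p₀ i
      - (eval (fun j => p₀ j + u j) Q - eval p₀ Q - eval u Q) * u i := by
    funext i; ring
  rw [he] at h
  rw [h, hqp₀]
  ring

variable {Q l G : MvPolynomial (Fin 4) ℂ}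

lemma caseII (hQ : Q.IsHomogeneous 2) (hl : l.IsHomogeneous 1) (hG : G.IsHomogeneous 3)
    (p₀ u₀ u₁ : Fin 4 → ℂ)
    (hqp₀ : eval p₀ Q = 0) (hLp₀ : eval p₀ l = 0)
    (hLu₀ : eval u₀ l = 0) (hLu₁ : eval u₁ l = 0)
    (htriple : ∀ x y z : ℂ, (fun i => x * p₀ i + y * u₀ i + z * u₁ i) = (0 : Fin 4 → ℂ) →
      x = 0 ∧ y = 0 ∧ z = 0)
    (hkey : ∀ u : Fin 4 → ℂ, eval u l = 0 → (∀ μ : ℂ, u ≠ fun i => μ * p₀ i) →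
      (fun i => eval u Q * p₀ i
        - (eval (fun j => p₀ j + u j) Q - eval p₀ Q - eval u Q) * u i) ≠ (0 : Fin 4 → ℂ)) :
    ∃ v : Fin 4 → ℂ, v ≠ 0 ∧ eval v l = 0 ∧ eval v Q = 0 ∧ eval v G = 0 := by
  -- scalar abbreviations
  set B0 : ℂ := eval (fun j => p₀ j + u₀ j) Q - eval p₀ Q - eval u₀ Q with hB0
  set B1 : ℂ := eval (fun j => p₀ j + u₁ j) Q - eval p₀ Q - eval u₁ Q with hB1
  set B01 : ℂ := eval (fun j => u₀ j + u₁ j) Q - eval u₀ Q - eval u₁ Q with hB01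
  set w0 : Fin 4 → ℂ := fun i => eval u₀ Q * p₀ i - B0 * u₀ i with hw0
  set w1 : Fin 4 → ℂ := fun i => B01 * p₀ i - B0 * u₁ i - B1 * u₀ i with hw1
  set w2 : Fin 4 → ℂ := fun i => eval u₁ Q * p₀ i - B1 * u₁ i with hw2
  -- the not-in-span facts
  have hnotspan : ∀ t μ : ℂ, (fun j => u₀ j + t * u₁ j) ≠ fun i => μ * p₀ i := by
    intro t μ h
    have h2 := htriple (-μ) 1 t (by
      funext i
      have := congrFun h i
      simp only [Pi.zero_apply]
      linear_combination this)
    exact one_ne_zero h2.2.1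
  have hu₁notspan : ∀ μ : ℂ, u₁ ≠ fun i => μ * p₀ i := by
    intro μ h
    have h2 := htriple (-μ) 0 1 (by
      funext i
      have := congrFun h i
      simp only [Pi.zero_apply]
      linear_combination this)
    exact one_ne_zero h2.2.2
  -- kernel facts for the lines
  have hLut : ∀ t : ℂ, eval (fun j => u₀ j + t * u₁ j) l = 0 := by
    intro t
    have h := lLin hl u₀ u₁ 1 t
    have he : (fun i => 1 * u₀ i + t * u₁ i) = fun j => u₀ j + t * u₁ j := by
      funext i; ring
    rw [he] at h
    rw [h, hLu₀, hLu₁]; ring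
  -- expansion of q along the line
  have hexp : ∀ t : ℂ, eval (fun j => u₀ j + t * u₁ j) Q
      = eval u₀ Q + t * B01 + t ^ 2 * eval u₁ Q := by
    intro t
    have h := qStar hQ u₀ u₁ 1 t
    have he : (fun i => 1 * u₀ i + t * u₁ i) = fun j => u₀ j + t * u₁ j := by
      funext i; ring
    rw [he] at h
    rw [h, ← hB01]; ring
  have hlinB : ∀ t : ℂ, eval (fun j => p₀ j + (u₀ j + t * u₁ j)) Q - eval p₀ Q
      - eval (fun j => u₀ j + t * u₁ j) Q = B0 + t * B1 := by
    intro t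
    have h := qBilin hQ p₀ u₀ u₁ t
    rw [hB0, hB1]
    exact h
  -- the pointwise quadratic-parametrization identity
  have hwid : ∀ (t : ℂ) (i : Fin 4), w0 i + w1 i * t + w2 i * t ^ 2
      = eval (fun j => u₀ j + t * u₁ j) Q * p₀ i
        - (eval (fun j => p₀ j + (u₀ j + t * u₁ j)) Q - eval p₀ Q
            - eval (fun j => u₀ j + t * u₁ j) Q) * (u₀ i + t * u₁ i) := by
    intro t i
    rw [hlinB t, hexp t, hw0, hw1, hw2]
    ring
  -- values of l on the w-family
  have hLw : ∀ t : ℂ, eval (fun i => w0 i + w1 i * t + w2 i * t ^ 2) l = 0 := by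
    intro t
    have h := lLin hl p₀ (fun j => u₀ j + t * u₁ j)
      (eval (fun j => u₀ j + t * u₁ j) Q)
      (-(eval (fun j => p₀ j + (u₀ j + t * u₁ j)) Q - eval p₀ Q
          - eval (fun j => u₀ j + t * u₁ j) Q))
    have he : (fun i => eval (fun j => u₀ j + t * u₁ j) Q * p₀ i
        + -(eval (fun j => p₀ j + (u₀ j + t * u₁ j)) Q - eval p₀ Q
            - eval (fun j => u₀ j + t * u₁ j) Q) * ((fun j => u₀ j + t * u₁ j) i))
        = fun i => w0 i + w1 i * t + w2 i * t ^ 2 := by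
      funext i
      rw [hwid t i]
      ring
    rw [he] at h
    rw [h, hLp₀, hLut t]
    ring
  by_cases hgw2 : eval w2 G = 0
  · -- the distinguished point on the conic is already a zero of G
    refine ⟨w2, ?_, ?_, ?_, hgw2⟩
    · have h := hkey u₁ hLu₁ hu₁notspan
      rw [← hB1] at h
      exact h
    · have h := lLin hl p₀ u₁ (eval u₁ Q) (-B1)
      have he : (fun i => eval u₁ Q * p₀ i + -B1 * u₁ i) = w2 := by
        funext i; rw [hw2]; ring
      rw [he] at h
      rw [h, hLp₀, hLu₁]; ring
    · have h := rOnConic hQ p₀ u₁ hqp₀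
      rw [← hB1] at h
      exact h
  · -- otherwise extract a root of the degree-6 polynomial
    set P : Polynomial ℂ := MvPolynomial.aeval (fun i => Polynomial.C (w0 i)
      + Polynomial.C (w1 i) * Polynomial.X + Polynomial.C (w2 i) * Polynomial.X ^ 2) G with hP
    set P' : Polynomial ℂ := MvPolynomial.aeval (fun i => Polynomial.C (w2 i)
      + Polynomial.C (w1 i) * Polynomial.X + Polynomial.C (w0 i) * Polynomial.X ^ 2) G with hP'
    have hevalP : ∀ t : ℂ, P.eval t = eval (fun i => w0 i + w1 i * t + w2 i * t ^ 2) G := by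
      intro t
      rw [hP, compPoly]
      exact congrFun (congrArg (fun v => ⇑(eval v)) (funext fun i => by simp)) G
    have hevalP' : ∀ t : ℂ, P'.eval t = eval (fun i => w2 i + w1 i * t + w0 i * t ^ 2) G := by
      intro t
      rw [hP', compPoly]
      exact congrFun (congrArg (fun v => ⇑(eval v)) (funext fun i => by simp)) G
    have hrel : ∀ t : ℂ, t ≠ 0 → P.eval t = t ^ 6 * P'.eval t⁻¹ := by
      intro t ht
      rw [hevalP, hevalP']
      have h6 : (t : ℂ) ^ 6 = (t ^ 2) ^ 3 := by ring
      rw [h6, ← evalScale hG (t ^ 2) (fun i => w2 i + w1 i * t⁻¹ + w0 i * t⁻¹ ^ 2)]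
      have he : (fun i => t ^ 2 * (w2 i + w1 i * t⁻¹ + w0 i * t⁻¹ ^ 2))
          = fun i => w0 i + w1 i * t + w2 i * t ^ 2 := by
        funext i
        field_simp
        ring
      rw [he]
    have h0 : P'.eval 0 ≠ 0 := by
      rw [hevalP' 0]
      have he : (fun i => w2 i + w1 i * 0 + w0 i * 0 ^ 2) = w2 := by
        funext i; ring
      rw [he]
      exact hgw2
    obtain ⟨t₀, ht₀⟩ := rootOfRel P P' 6 (by norm_num) hrel h0
    refine ⟨fun i => w0 i + w1 i * t₀ + w2 i * t₀ ^ 2, ?_, hLw t₀, ?_, ?_⟩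
    · -- nonvanishing
      have hne := hkey (fun j => u₀ j + t₀ * u₁ j) (hLut t₀) (hnotspan t₀)
      intro hv0
      apply hne
      funext i
      show eval (fun j => u₀ j + t₀ * u₁ j) Q * p₀ i
          - (eval (fun j => p₀ j + (u₀ j + t₀ * u₁ j)) Q - eval p₀ Q
              - eval (fun j => u₀ j + t₀ * u₁ j) Q) * (u₀ i + t₀ * u₁ i) = (0 : ℂ)
      rw [← hwid t₀ i]
      exact congrFun hv0 i
    · -- Q vanishes
      have hq := rOnConic hQ p₀ (fun j => u₀ j + t₀ * u₁ j) hqp₀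
      have he : (fun i => w0 i + w1 i * t₀ + w2 i * t₀ ^ 2)
          = fun i => eval (fun j => u₀ j + t₀ * u₁ j) Q * p₀ i
            - (eval (fun j => p₀ j + (u₀ j + t₀ * u₁ j)) Q - eval p₀ Q
                - eval (fun j => u₀ j + t₀ * u₁ j) Q) * (u₀ i + t₀ * u₁ i) := by
        funext i; exact hwid t₀ i
      rw [he]
      exact hq
    · rw [← hevalP t₀]
      exact ht₀

variable {Q l G : MvPolynomial (Fin 4) ℂ}

lemma binEval (p u : Fin 4 → ℂ) (H : MvPolynomial (Fin 4) ℂ) (s t : ℂ) :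
    eval ![s, t] (MvPolynomial.aeval
        (fun i => C (p i) * X 0 + C (u i) * X 1 : Fin 4 → MvPolynomial (Fin 2) ℂ) H)
      = eval (fun i => s * p i + t * u i) H := by
  rw [compMv]
  exact congrFun (congrArg (fun v => ⇑(eval v))
    (funext fun i => by simp; ring)) H

lemma binHom {d : ℕ} (p u : Fin 4 → ℂ) {H : MvPolynomial (Fin 4) ℂ} (hH : H.IsHomogeneous d) :
    (MvPolynomial.aeval
        (fun i => C (p i) * X 0 + C (u i) * X 1 : Fin 4 → MvPolynomial (Fin 2) ℂ) H
      ).IsHomogeneous d := by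
  have := hH.aeval (fun i => (C (p i) * X 0 + C (u i) * X 1 : MvPolynomial (Fin 2) ℂ))
    (fun i => (isHomogeneous_C_mul_X _ _).add (isHomogeneous_C_mul_X _ _))
  simpa using this

/-- the common-zero lemma: a linear, quadratic and cubic form in 4 variables over ℂ
have a common nontrivial zero. -/
lemma commonZero (hQ : Q.IsHomogeneous 2) (hl : l.IsHomogeneous 1) (hl0 : l ≠ 0)
    (hG : G.IsHomogeneous 3) :
    ∃ v : Fin 4 → ℂ, v ≠ 0 ∧ eval v l = 0 ∧ eval v Q = 0 ∧ eval v G = 0 := by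
  obtain ⟨A, hAker, hAind⟩ := kerBasis hl hl0
  -- Step A : a nonzero point on the plane conic
  obtain ⟨s, t, hst, hqev⟩ := binRoot (by norm_num) _ (binHom (A 0) (A 1) hQ)
  rw [binEval] at hqev
  set p₀ : Fin 4 → ℂ := fun i => s * A 0 i + t * A 1 i with hp₀def
  have hqp₀ : eval p₀ Q = 0 := hqev
  have hp₀ : p₀ ≠ 0 := by
    intro h
    refine hst ⟨?_, ?_⟩ <;>
    · have h3 := hAind s t 0 (by
        funext i
        have := congrFun h i
        simp only [Pi.zero_apply] at this ⊢
        rw [hp₀def] at this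
        linear_combination this)
      first | exact h3.1 | exact h3.2.1
  have hLp₀ : eval p₀ l = 0 := by
    rw [hp₀def, lLin hl, hAker 0, hAker 1]
    ring
  by_cases hcase : ∃ u : Fin 4 → ℂ, eval u l = 0 ∧ (∀ μ : ℂ, u ≠ fun i => μ * p₀ i) ∧
      eval u Q = 0 ∧ eval (fun j => p₀ j + u j) Q - eval p₀ Q - eval u Q = 0
  · -- Case I : the conic contains a line through p₀
    obtain ⟨u, hLu, hu, hqu, hBu⟩ := hcase
    obtain ⟨s', t', hst', hgev⟩ := binRoot (by norm_num) _ (binHom p₀ u hG)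
    rw [binEval] at hgev
    refine ⟨fun i => s' * p₀ i + t' * u i, ?_, ?_, ?_, hgev⟩
    · intro h
      by_cases ht' : t' = 0
      · have hs' : s' ≠ 0 := fun hs' => hst' ⟨hs', ht'⟩
        apply hp₀
        funext i
        have := congrFun h i
        simp only [Pi.zero_apply, ht'] at this ⊢
        have h2 : s' * p₀ i = 0 := by linear_combination this
        rcases mul_eq_zero.mp h2 with h3 | h3
        · exact absurd h3 hs'
        · exact h3
      · apply hu (-s' / t')
        funext i
        have := congrFun h i
        simp only [Pi.zero_apply] at this
        rw [div_mul_eq_mul_div, eq_div_iff ht']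
        linear_combination this
    · rw [lLin hl, hLp₀, hLu]; ring
    · rw [qStar hQ]
      linear_combination s' ^ 2 * hqp₀ + s' * t' * hBu + t' ^ 2 * hqu
  · -- Case II
    push_neg at hcase
    have hkey : ∀ u : Fin 4 → ℂ, eval u l = 0 → (∀ μ : ℂ, u ≠ fun i => μ * p₀ i) →
        (fun i => eval u Q * p₀ i
          - (eval (fun j => p₀ j + u j) Q - eval p₀ Q - eval u Q) * u i) ≠ (0 : Fin 4 → ℂ) := by
      intro u hLu hu hr0
      by_cases hB : eval (fun j => p₀ j + u j) Q - eval p₀ Q - eval u Q = 0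
      · by_cases hqu : eval u Q = 0
        · exact hcase u hLu hu hqu hB
        · apply hp₀
          funext i
          have := congrFun hr0 i
          simp only [Pi.zero_apply, hB] at this
          have h2 : eval u Q * p₀ i = 0 := by linear_combination this
          rcases mul_eq_zero.mp h2 with h3 | h3
          · exact absurd h3 hqu
          · exact h3
      · apply hu (eval u Q / (eval (fun j => p₀ j + u j) Q - eval p₀ Q - eval u Q))
        funext i
        have := congrFun hr0 i
        simp only [Pi.zero_apply] at this
        rw [div_mul_eq_mul_div, eq_div_iff hB]
        linear_combination -this
    -- choose the auxiliary directions
    obtain ⟨u₀, u₁, hLu₀, hLu₁, htriple⟩ :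
        ∃ u₀ u₁ : Fin 4 → ℂ, eval u₀ l = 0 ∧ eval u₁ l = 0 ∧
          ∀ x y z : ℂ, (fun i => x * p₀ i + y * u₀ i + z * u₁ i) = (0 : Fin 4 → ℂ) →
            x = 0 ∧ y = 0 ∧ z = 0 := by
      by_cases hs : s = 0
      · have ht : t ≠ 0 := fun ht => hst ⟨hs, ht⟩
        refine ⟨A 0, A 2, hAker 0, hAker 2, fun x y z h => ?_⟩
        have h3 := hAind (y + x * s) (x * t) z (by
          funext i
          have := congrFun h i
          simp only [Pi.zero_apply, hp₀def] at this ⊢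
          linear_combination this)
        have hx : x = 0 := by
          have := h3.2.1
          rcases mul_eq_zero.mp this with h4 | h4
          · exact h4
          · exact absurd h4 ht
        refine ⟨hx, ?_, h3.2.2⟩
        have := h3.1
        rw [hx] at this
        simpa using this
      · refine ⟨A 1, A 2, hAker 1, hAker 2, fun x y z h => ?_⟩
        have h3 := hAind (x * s) (x * t + y) z (by
          funext i
          have := congrFun h i
          simp only [Pi.zero_apply, hp₀def] at this ⊢
          linear_combination this)
        have hx : x = 0 := by
          rcases mul_eq_zero.mp h3.1 with h4 | h4
          · exact h4
          · exact absurd h4 hs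
        refine ⟨hx, ?_, h3.2.2⟩
        have := h3.2.1
        rw [hx] at this
        simpa using this
    exact caseII hQ hl hG p₀ u₀ u₁ hqp₀ hLp₀ hLu₀ hLu₁ htriple hkey

/-- A quartic surface in `ℙ³(ℂ)` possessing a trope is singular: if a nonzero
quartic form `F` can be written as `Q² + ℓ·G` with `ℓ` a nonzero linear form,
`Q` a quadratic form and `G` a cubic form, then there is a nonzero point where
all four partial derivatives of `F` vanish. -/
theorem stmt9 (F Q ℓ G : MvPolynomial (Fin 4) ℂ)
    (hF : F.IsHomogeneous 4) (hF0 : F ≠ 0)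
    (hQ : Q.IsHomogeneous 2)
    (hℓ : ℓ.IsHomogeneous 1) (hℓ0 : ℓ ≠ 0)
    (hG : G.IsHomogeneous 3)
    (hFQG : F = Q ^ 2 + ℓ * G) :
    ∃ v : Fin 4 → ℂ, v ≠ 0 ∧ ∀ i : Fin 4, eval v (pderiv i F) = 0 := by
  obtain ⟨v, hv0, hlv, hqv, hgv⟩ := commonZero hQ hℓ hℓ0 hG
  refine ⟨v, hv0, fun i => ?_⟩
  rw [hFQG, sq]
  simp [pderiv_mul, hlv, hqv, hgv]
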